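/- arXiv:2006.02087 — 4 statements merged into one kernel-verified Lean document; each statement's English description precedes it below -/
import Mathlib

section
/- For the model f(x₁,x₂) = x₁ + x₂² with X = (X₁,X₂) ~ N(0, (1/a) I₂), the Shapley effect of the first input equals a/(a+2) and that of the second input equals 2/(a+2); in particular both sum to 1 and the deviation of the first Shapley effect from 1 is exactly 2/(a+2) = O(1/a). -/
open MeasureTheory ProbabilityTheory

open Real
open scoped NNReal ENNReal


lemma myPdfEq {v : ℝ} (hv : 0 < v) (x : ℝ) :
    gaussianPDFReal 0 v.toNNReal x = (Real.sqrt (2 * π * v))⁻¹ * Real.exp (-(2*v)⁻¹ * x^2) := by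
  rw [gaussianPDFReal, Real.coe_toNNReal _ hv.le]
  rw [sub_zero]
  rw [neg_div, div_eq_inv_mul, neg_mul]

lemma myIntTransfer {v : ℝ} (hv : 0 < v) (g : ℝ → ℝ) :
    ∫ x, g x ∂(gaussianReal 0 v.toNNReal) = ∫ x, gaussianPDFReal 0 v.toNNReal x * g x := by
  have hV : v.toNNReal ≠ 0 := by
    simp only [ne_eq, Real.toNNReal_eq_zero, not_le]; exact hv
  rw [gaussianReal_of_var_ne_zero 0 hV, gaussianPDF_def]
  rw [show (fun x => ENNReal.ofReal (gaussianPDFReal 0 v.toNNReal x))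
      = (fun x => ((Real.toNNReal (gaussianPDFReal 0 v.toNNReal x) : NNReal) : ENNReal)) from rfl]
  rw [integral_withDensity_eq_integral_smul (measurable_gaussianPDFReal 0 _).real_toNNReal g]
  congr 1; ext x
  simp [NNReal.smul_def, Real.coe_toNNReal _ (gaussianPDFReal_nonneg 0 _ x)]

lemma myIntegrableTransfer {v : ℝ} (hv : 0 < v) {g : ℝ → ℝ} (hg : Measurable g) :
    Integrable g (gaussianReal 0 v.toNNReal) ↔
      Integrable (fun x => gaussianPDFReal 0 v.toNNReal x * g x) := by
  have hV : v.toNNReal ≠ 0 := by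
    simp only [ne_eq, Real.toNNReal_eq_zero, not_le]; exact hv
  rw [gaussianReal_of_var_ne_zero 0 hV, gaussianPDF_def]
  rw [show (fun x => ENNReal.ofReal (gaussianPDFReal 0 v.toNNReal x))
      = (fun x => ((Real.toNNReal (gaussianPDFReal 0 v.toNNReal x) : NNReal) : ENNReal)) from rfl]
  rw [integrable_withDensity_iff_integrable_smul (measurable_gaussianPDFReal 0 _).real_toNNReal]
  constructor <;> intro h <;> refine h.congr (Filter.Eventually.of_forall fun x => ?_) <;>
    simp [NNReal.smul_def, Real.coe_toNNReal _ (gaussianPDFReal_nonneg 0 _ x)]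

lemma myIntegrablePow {v : ℝ} (hv : 0 < v) (n : ℕ) :
    Integrable (fun x => x ^ n) (gaussianReal 0 v.toNNReal) := by
  rw [myIntegrableTransfer hv (g := fun x => x ^ n) (by fun_prop)]
  have hb : (0:ℝ) < (2*v)⁻¹ := by positivity
  have h : Integrable (fun x : ℝ => x ^ (n:ℝ) * Real.exp (-(2*v)⁻¹ * x^2)) :=
    integrable_rpow_mul_exp_neg_mul_sq hb (by exact_mod_cast neg_one_lt_zero.trans_le n.cast_nonneg : (-1:ℝ) < (n:ℝ))
  simp_rw [Real.rpow_natCast] at h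
  refine ((h.const_mul ((Real.sqrt (2 * π * v))⁻¹)).congr
    (Filter.Eventually.of_forall fun x => ?_))
  simp only [myPdfEq hv]; ring

lemma myIntPowExp {b : ℝ} (hb : 0 < b) (n : ℕ) :
    ∫ x : ℝ, (x^2)^n * Real.exp (-b * x^2)
      = b ^ ((-(2*(n:ℝ)+1))/2) * Real.Gamma ((2*(n:ℝ)+1)/2) := by
  have h1 : ∫ x : ℝ, (x^2)^n * Real.exp (-b * x^2)
      = 2 * ∫ x in Set.Ioi (0:ℝ), (x^2)^n * Real.exp (-b * x^2) := by
    rw [← integral_comp_abs (f := fun x => (x^2)^n * Real.exp (-b * x^2))]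
    congr 1; ext x; rw [sq_abs]
  have h2 : ∫ x in Set.Ioi (0:ℝ), (x^2)^n * Real.exp (-b * x^2)
      = ∫ x in Set.Ioi (0:ℝ), x ^ ((2*(n:ℝ))) * Real.exp (-b * x ^ (2:ℝ)) := by
    refine setIntegral_congr_fun measurableSet_Ioi (fun x hx => ?_)
    rw [show ((2:ℝ)*(n:ℝ)) = ((2*n : ℕ):ℝ) by push_cast; ring, Real.rpow_natCast,
      show ((2:ℝ)) = ((2:ℕ):ℝ) by norm_num, Real.rpow_natCast, pow_mul]
  have h3 := integral_rpow_mul_exp_neg_mul_rpow (p := 2) (q := 2*(n:ℝ)) (b := b)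
    two_pos (lt_of_lt_of_le neg_one_lt_zero (by positivity)) hb
  rw [h1, h2, h3]
  ring

lemma mySqrtSplit {v : ℝ} (hv : 0 < v) :
    Real.sqrt (2 * π * v) = Real.sqrt π * Real.sqrt (2*v) := by
  rw [show 2 * π * v = π * (2*v) by ring, Real.sqrt_mul pi_pos.le]

lemma myM2 {v : ℝ} (hv : 0 < v) :
    ∫ x, x^2 ∂(gaussianReal 0 v.toNNReal) = v := by
  rw [myIntTransfer hv]
  have hb : (0:ℝ) < (2*v)⁻¹ := by positivity
  have h := myIntPowExp hb 1
  simp only [pow_one] at h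
  calc ∫ x, gaussianPDFReal 0 v.toNNReal x * x^2
      = ∫ x, (Real.sqrt (2 * π * v))⁻¹ * ((x^2)^1 * Real.exp (-(2*v)⁻¹ * x^2)) := by
        congr 1; ext x; rw [myPdfEq hv]; ring
    _ = (Real.sqrt (2 * π * v))⁻¹ *
        ∫ x, (x^2)^1 * Real.exp (-(2*v)⁻¹ * x^2) := integral_const_mul _ _
    _ = (Real.sqrt (2 * π * v))⁻¹ * ((2*v)⁻¹ ^ ((-(2*(1:ℝ)+1))/2) * Real.Gamma ((2*(1:ℝ)+1)/2)) := by
        rw [myIntPowExp hb 1]; norm_num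
    _ = v := by
        have e1 : ((2*v)⁻¹ : ℝ) ^ ((-(2*(1:ℝ)+1))/2) = (2*v) ^ ((3:ℝ)/2) := by
          rw [show ((-(2*(1:ℝ)+1))/2) = -((3:ℝ)/2) by norm_num,
            Real.inv_rpow (by positivity), Real.rpow_neg (by positivity), inv_inv]
        have e2 : ((2*v) : ℝ) ^ ((3:ℝ)/2) = (2*v) * Real.sqrt (2*v) := by
          rw [show ((3:ℝ)/2) = 1 + 1/2 by norm_num, Real.rpow_add (by positivity),
            Real.rpow_one, ← Real.sqrt_eq_rpow]
        have e3 : Real.Gamma ((2*(1:ℝ)+1)/2) = Real.sqrt π / 2 := by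
          rw [show ((2*(1:ℝ)+1)/2) = 1/2 + 1 by norm_num,
            Real.Gamma_add_one (by norm_num), Real.Gamma_one_half_eq]
          ring
        rw [e1, e2, e3, mySqrtSplit hv]
        have hs : Real.sqrt (2*v) ≠ 0 := by positivity
        have hp : Real.sqrt π ≠ 0 := by positivity
        field_simp

lemma myM4 {v : ℝ} (hv : 0 < v) :
    ∫ x, x^4 ∂(gaussianReal 0 v.toNNReal) = 3 * v^2 := by
  rw [myIntTransfer hv]
  have hb : (0:ℝ) < (2*v)⁻¹ := by positivity
  calc ∫ x, gaussianPDFReal 0 v.toNNReal x * x^4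
      = ∫ x, (Real.sqrt (2 * π * v))⁻¹ * ((x^2)^2 * Real.exp (-(2*v)⁻¹ * x^2)) := by
        congr 1; ext x; rw [myPdfEq hv]; ring
    _ = (Real.sqrt (2 * π * v))⁻¹ *
        ∫ x, (x^2)^2 * Real.exp (-(2*v)⁻¹ * x^2) := integral_const_mul _ _
    _ = (Real.sqrt (2 * π * v))⁻¹ * ((2*v)⁻¹ ^ ((-(2*(2:ℝ)+1))/2) * Real.Gamma ((2*(2:ℝ)+1)/2)) := by
        rw [myIntPowExp hb 2]; norm_num
    _ = 3 * v^2 := by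
        have e1 : ((2*v)⁻¹ : ℝ) ^ ((-(2*(2:ℝ)+1))/2) = (2*v) ^ ((5:ℝ)/2) := by
          rw [show ((-(2*(2:ℝ)+1))/2) = -((5:ℝ)/2) by norm_num,
            Real.inv_rpow (by positivity), Real.rpow_neg (by positivity), inv_inv]
        have e2 : ((2*v) : ℝ) ^ ((5:ℝ)/2) = (2*v)^2 * Real.sqrt (2*v) := by
          rw [show ((5:ℝ)/2) = 2 + 1/2 by norm_num, Real.rpow_add (by positivity),
            ← Real.sqrt_eq_rpow, show ((2:ℝ)) = ((2:ℕ):ℝ) by norm_num, Real.rpow_natCast]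
        have e3 : Real.Gamma ((2*(2:ℝ)+1)/2) = 3 * Real.sqrt π / 4 := by
          rw [show ((2*(2:ℝ)+1)/2) = 3/2 + 1 by norm_num,
            Real.Gamma_add_one (by norm_num),
            show ((3:ℝ)/2) = 1/2 + 1 by norm_num,
            Real.Gamma_add_one (by norm_num), Real.Gamma_one_half_eq]
          ring
        rw [e1, e2, e3, mySqrtSplit hv]
        have hs : Real.sqrt (2*v) ≠ 0 := by positivity
        have hp : Real.sqrt π ≠ 0 := by positivity
        field_simp
        ring

lemma myM1 {v : ℝ} (hv : 0 < v) :
    ∫ x, x ∂(gaussianReal 0 v.toNNReal) = 0 := by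
  have hone : (NNReal.mk ((-1:ℝ)^2) (sq_nonneg _)) = 1 := by ext; norm_num
  have hmap : (gaussianReal 0 v.toNNReal).map (fun x => -1 * x) = gaussianReal 0 v.toNNReal := by
    rw [show (fun x : ℝ => -1 * x) = (((-1:ℝ)) * ·) from rfl, gaussianReal_map_const_mul,
      hone, one_mul, mul_zero]
  have key : ∫ x, x ∂(gaussianReal 0 v.toNNReal)
      = ∫ x, -1 * x ∂(gaussianReal 0 v.toNNReal) := by
    conv_lhs => rw [← hmap]
    exact integral_map (by fun_prop) measurable_id.aestronglyMeasurable
  have h2 : ∫ x, -1 * x ∂(gaussianReal 0 v.toNNReal)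
      = - ∫ x, x ∂(gaussianReal 0 v.toNNReal) := by
    rw [show (∫ x, -1*x ∂(gaussianReal 0 v.toNNReal)) = ∫ x, -(x) ∂(gaussianReal 0 v.toNNReal)
      from by congr 1; ext x; ring, integral_neg]
  linarith [key, h2]

section VarLemmas
variable {Ω : Type*} [MeasurableSpace Ω] {μ : Measure Ω}

lemma myVarCongr {f g : Ω → ℝ} (h : f =ᵐ[μ] g) : variance f μ = variance g μ := by
  have hi : ∫ ω, f ω ∂μ = ∫ ω, g ω ∂μ := integral_congr_ae h
  unfold ProbabilityTheory.variance ProbabilityTheory.evariance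
  congr 1
  apply lintegral_congr_ae
  filter_upwards [h] with ω hω
  rw [hω, hi]

lemma myVarAddConst [IsProbabilityMeasure μ] {f : Ω → ℝ} (hf : Integrable f μ) (c : ℝ) :
    variance (fun ω => f ω + c) μ = variance f μ := by
  have hi : ∫ ω, (f ω + c) ∂μ = (∫ ω, f ω ∂μ) + c := by
    rw [integral_add hf (integrable_const c), integral_const]; simp
  unfold ProbabilityTheory.variance ProbabilityTheory.evariance
  congr 1
  refine lintegral_congr fun ω => ?_
  simp only []
  rw [hi, show f ω + c - ((∫ ω, f ω ∂μ) + c) = f ω - ∫ ω, f ω ∂μ from by ring]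

lemma myVarComp {g : ℝ → ℝ} {X : Ω → ℝ} (hg : Measurable g) (hX : Measurable X) :
    variance (fun ω => g (X ω)) μ = variance g (μ.map X) := by
  have hm : ∫ x, g x ∂(μ.map X) = ∫ ω, g (X ω) ∂μ :=
    integral_map hX.aemeasurable hg.aestronglyMeasurable
  unfold ProbabilityTheory.variance ProbabilityTheory.evariance
  congr 1
  rw [lintegral_map (f := fun x => ‖g x - ∫ x, g x ∂(μ.map X)‖ₑ ^ 2) (by fun_prop) hX]
  refine lintegral_congr fun ω => ?_
  simp only []
  rw [hm]

end VarLemmas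

lemma myVarId {v : ℝ} (hv : 0 < v) :
    variance (fun x : ℝ => x) (gaussianReal 0 v.toNNReal) = v := by
  have hL2 : MemLp (fun x : ℝ => x) 2 (gaussianReal 0 v.toNNReal) :=
    (memLp_two_iff_integrable_sq (aestronglyMeasurable_id)).mpr
      (myIntegrablePow hv 2)
  rw [variance_eq_sub hL2,
    show ((fun x : ℝ => x)^2) = fun x : ℝ => x^2 from by funext x; show x^2 = x^2; rfl,
    myM2 hv, myM1 hv]
  norm_num

lemma myVarSq {v : ℝ} (hv : 0 < v) :
    variance (fun x : ℝ => x^2) (gaussianReal 0 v.toNNReal) = 2 * v^2 := by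
  have hL2 : MemLp (fun x : ℝ => x^2) 2 (gaussianReal 0 v.toNNReal) :=
    (memLp_two_iff_integrable_sq (by fun_prop)).mpr
      ((myIntegrablePow hv 4).congr (Filter.Eventually.of_forall fun x => by ring))
  rw [variance_eq_sub hL2,
    show ((fun x : ℝ => x^2)^2) = fun x : ℝ => x^4 from by funext x; show (x^2)^2 = x^4; ring,
    myM4 hv, myM2 hv]
  ring

/-- Variance of the conditional expectation of `Y` given (the σ-algebra generated by) `Z`. -/
noncomputable def varCondExp {Ω : Type*} [MeasurableSpace Ω] (P : Measure Ω)
    (Y Z : Ω → ℝ) : ℝ :=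
  variance (P[Y | MeasurableSpace.comap Z inferInstance]) P

/-- Shapley effect of the first of two inputs:
`η₁ = (1/(2 Var Y)) (Var E[Y|X₁] + Var Y − Var E[Y|X₂])`. -/
noncomputable def eta1 {Ω : Type*} [MeasurableSpace Ω] (P : Measure Ω)
    (Y X₁ X₂ : Ω → ℝ) : ℝ :=
  (1 / (2 * variance Y P)) * (varCondExp P Y X₁ + variance Y P - varCondExp P Y X₂)

/-- For `Y = X₁ + X₂²` with `X₁, X₂` independent centered Gaussians of variance `1/a`,
the Shapley effects are `η₁ = a/(a+2)` and `η₂ = 2/(a+2)`; they sum to `1` and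
`1 − η₁ = 2/(a+2)`. -/
theorem stmt2 {Ω : Type*} [MeasurableSpace Ω] (P : Measure Ω) [IsProbabilityMeasure P]
    (a : ℝ) (ha : 0 < a)
    (X₁ X₂ : Ω → ℝ) (h₁ : Measurable X₁) (h₂ : Measurable X₂)
    (hindep : IndepFun X₁ X₂ P)
    (hl₁ : Measure.map X₁ P = gaussianReal 0 (Real.toNNReal (1 / a)))
    (hl₂ : Measure.map X₂ P = gaussianReal 0 (Real.toNNReal (1 / a))) :
    eta1 P (fun ω => X₁ ω + (X₂ ω) ^ 2) X₁ X₂ = a / (a + 2) ∧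
    eta1 P (fun ω => X₁ ω + (X₂ ω) ^ 2) X₂ X₁ = 2 / (a + 2) ∧
    eta1 P (fun ω => X₁ ω + (X₂ ω) ^ 2) X₁ X₂ +
      eta1 P (fun ω => X₁ ω + (X₂ ω) ^ 2) X₂ X₁ = 1 ∧
    1 - eta1 P (fun ω => X₁ ω + (X₂ ω) ^ 2) X₁ X₂ = 2 / (a + 2) := by
  have hv : (0:ℝ) < 1/a := by positivity
  set v : ℝ := 1/a with hvdef
  -- Memℒp and integrability
  have hL2id : MemLp (fun x : ℝ => x) 2 (gaussianReal 0 v.toNNReal) :=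
    (memLp_two_iff_integrable_sq (aestronglyMeasurable_id)).mpr (myIntegrablePow hv 2)
  have hL2sq : MemLp (fun x : ℝ => x^2) 2 (gaussianReal 0 v.toNNReal) :=
    (memLp_two_iff_integrable_sq (by fun_prop)).mpr
      ((myIntegrablePow hv 4).congr (Filter.Eventually.of_forall fun x => by ring))
  have hmemX1 : MemLp X₁ 2 P := by
    have h := hL2id
    rw [← hl₁] at h
    exact (memLp_map_measure_iff measurable_id.aestronglyMeasurable h₁.aemeasurable).mp h
  have hmemX2sq : MemLp (fun ω => X₂ ω ^ 2) 2 P := by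
    have h := hL2sq
    rw [← hl₂] at h
    exact (memLp_map_measure_iff (by fun_prop) h₂.aemeasurable).mp h
  have hiX1 : Integrable X₁ P := hmemX1.integrable one_le_two
  have hiX2sq : Integrable (fun ω => X₂ ω ^ 2) P := hmemX2sq.integrable one_le_two
  -- expectation of X₂²
  have hEX2sq : ∫ ω, X₂ ω ^ 2 ∂P = v := by
    have h := integral_map (μ := P) (φ := X₂) (f := fun x : ℝ => x^2) h₂.aemeasurable (by fun_prop)
    rw [hl₂] at h
    rw [← h, myM2 hv]
  -- σ-algebras
  have hm1 : MeasurableSpace.comap X₁ inferInstance ≤ (inferInstance : MeasurableSpace Ω) :=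
    h₁.comap_le
  have hm2 : MeasurableSpace.comap X₂ inferInstance ≤ (inferInstance : MeasurableSpace Ω) :=
    h₂.comap_le
  have hmX1 : Measurable[MeasurableSpace.comap X₁ inferInstance] X₁ := fun s hs => ⟨s, hs, rfl⟩
  have hmX2 : Measurable[MeasurableSpace.comap X₂ inferInstance] X₂ := fun s hs => ⟨s, hs, rfl⟩
  have hsmX1 : StronglyMeasurable[MeasurableSpace.comap X₁ inferInstance] X₁ := hmX1.stronglyMeasurable
  have hsmX2sq : StronglyMeasurable[MeasurableSpace.comap X₂ inferInstance] (fun ω => X₂ ω ^ 2) :=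
    (hmX2.pow_const 2).stronglyMeasurable
  -- conditional expectation given σ(X₁)
  have hce1 : P[(fun ω => X₁ ω + X₂ ω ^ 2)|MeasurableSpace.comap X₁ inferInstance] =ᵐ[P] fun ω => X₁ ω + v := by
    have hadd : P[(fun ω => X₁ ω + X₂ ω ^ 2)|MeasurableSpace.comap X₁ inferInstance]
        =ᵐ[P] P[X₁|MeasurableSpace.comap X₁ inferInstance] + P[(fun ω => X₂ ω ^ 2)|MeasurableSpace.comap X₁ inferInstance] :=
      condExp_add hiX1 hiX2sq _
    have he1 : P[X₁|MeasurableSpace.comap X₁ inferInstance] = X₁ := condExp_of_stronglyMeasurable hm1 hsmX1 hiX1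
    have he2 : P[(fun ω => X₂ ω ^ 2)|MeasurableSpace.comap X₁ inferInstance] =ᵐ[P] fun _ => ∫ ω, X₂ ω ^ 2 ∂P :=
      condExp_indep_eq hm2 hm1 hsmX2sq (hindep.symm)
    filter_upwards [hadd, he2] with ω hω h2ω
    rw [hω, Pi.add_apply, he1, h2ω, hEX2sq]
  -- conditional expectation given σ(X₂)
  have hce2 : P[(fun ω => X₁ ω + X₂ ω ^ 2)|MeasurableSpace.comap X₂ inferInstance] =ᵐ[P] fun ω => X₂ ω ^ 2 + ∫ ω, X₁ ω ∂P := by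
    have hadd : P[(fun ω => X₁ ω + X₂ ω ^ 2)|MeasurableSpace.comap X₂ inferInstance]
        =ᵐ[P] P[X₁|MeasurableSpace.comap X₂ inferInstance] + P[(fun ω => X₂ ω ^ 2)|MeasurableSpace.comap X₂ inferInstance] :=
      condExp_add hiX1 hiX2sq _
    have he1 : P[X₁|MeasurableSpace.comap X₂ inferInstance] =ᵐ[P] fun _ => ∫ ω, X₁ ω ∂P :=
      condExp_indep_eq hm1 hm2 hsmX1 hindep
    have he2 : P[(fun ω => X₂ ω ^ 2)|MeasurableSpace.comap X₂ inferInstance] = fun ω => X₂ ω ^ 2 :=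
      condExp_of_stronglyMeasurable hm2 hsmX2sq hiX2sq
    filter_upwards [hadd, he1] with ω hω h1ω
    rw [hω, Pi.add_apply, he2, h1ω]
    ring
  -- variances
  have hVarX1 : variance X₁ P = v := by
    have := myVarComp (μ := P) (g := fun x : ℝ => x) (X := X₁) (by exact measurable_id) h₁
    rw [hl₁, myVarId hv] at this
    exact this
  have hVarX2sq : variance (fun ω => X₂ ω ^ 2) P = 2 * v^2 := by
    have := myVarComp (μ := P) (g := fun x : ℝ => x^2) (X := X₂) (by fun_prop) h₂
    rw [this, hl₂, myVarSq hv]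
  have hVarY : variance (fun ω => X₁ ω + X₂ ω ^ 2) P = v + 2 * v^2 := by
    have hII : IndepFun X₁ (fun ω => X₂ ω ^ 2) P :=
      hindep.comp measurable_id (measurable_id.pow_const 2)
    have hadd := hII.variance_add hmemX1 hmemX2sq
    rw [show (fun ω => X₁ ω + X₂ ω ^ 2) = X₁ + fun ω => X₂ ω ^ 2 from rfl, hadd,
      hVarX1, hVarX2sq]
  have hvar1 : varCondExp P (fun ω => X₁ ω + X₂ ω ^ 2) X₁ = v := by
    unfold varCondExp
    rw [myVarCongr hce1, myVarAddConst hiX1, hVarX1]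
  have hvar2 : varCondExp P (fun ω => X₁ ω + X₂ ω ^ 2) X₂ = 2 * v^2 := by
    unfold varCondExp
    rw [myVarCongr hce2, myVarAddConst hiX2sq, hVarX2sq]
  have hane : a + 2 ≠ 0 := by linarith
  refine ⟨?_, ?_, ?_, ?_⟩ <;>
    unfold eta1 <;>
    rw [hvar1, hvar2, hVarY] <;>
    rw [hvdef] <;>
    field_simp <;>
    ring
end

section
/- Let f : R^p → R be C¹ with f and its growth subpolynomial: there exist C > 0 and k ∈ N with |f(x)| ≤ C(1 + ‖x‖^k) for all x. Then for each n ≥ 1, the rescaled function f_n(x) := √n (f(x/√n + μ) − f(μ)) satisfies the bound |f_n(x)| ≤ C'(‖x‖ · 1_{‖x‖ ≤ √n} + ‖x‖^k / n^{(k−1)/2} · 1_{‖x‖ > √n}) for a constant C' independent of n and x, where C' depends only on C, k, μ, and sup_{‖y‖ ≤ 1+‖μ‖} ‖Df(y)‖. -/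
/-- If `f` is `C¹` and subpolynomial of degree `k ≥ 1`, then the rescaled functions
`f_n(x) = √n (f(x/√n + μ) − f(μ))` satisfy
`|f_n(x)| ≤ C' (‖x‖ 1_{‖x‖ ≤ √n} + ‖x‖^k/√n^{k−1} 1_{‖x‖ > √n})` uniformly in `n` and `x`. -/
theorem stmt4 {p : ℕ} (f : EuclideanSpace ℝ (Fin p) → ℝ) (μ : EuclideanSpace ℝ (Fin p))
    (hf : ContDiff ℝ 1 f) (C : ℝ) (hC : 0 < C) (k : ℕ) (hk : 1 ≤ k)
    (hgrowth : ∀ x, |f x| ≤ C * (1 + ‖x‖ ^ k)) :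
    ∃ C' : ℝ, 0 < C' ∧ ∀ n : ℕ, 1 ≤ n → ∀ x : EuclideanSpace ℝ (Fin p),
      |Real.sqrt n * (f ((Real.sqrt n)⁻¹ • x + μ) - f μ)| ≤
        C' * (if ‖x‖ ≤ Real.sqrt n then ‖x‖ else ‖x‖ ^ k / Real.sqrt n ^ (k - 1)) := by
  -- supremum of the derivative on the closed unit ball around μ
  have hderiv : Continuous fun y => ‖fderiv ℝ f y‖ :=
    (hf.continuous_fderiv one_ne_zero).norm
  obtain ⟨y₀, -, hy₀⟩ := (isCompact_closedBall μ 1).exists_isMaxOn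
    ⟨μ, Metric.mem_closedBall_self zero_le_one⟩ hderiv.continuousOn
  set M : ℝ := ‖fderiv ℝ f y₀‖ with hM
  have hM0 : 0 ≤ M := norm_nonneg _
  set C₂ : ℝ := C * (2 + ‖μ‖ ^ k + (1 + ‖μ‖) ^ k) with hC₂
  have hC₂0 : 0 < C₂ := by
    apply mul_pos hC
    positivity
  refine ⟨M + C₂, by linarith, ?_⟩
  intro n hn x
  have hn0 : (0:ℝ) < Real.sqrt n := Real.sqrt_pos.2 (by exact_mod_cast Nat.pos_of_ne_zero (by omega))
  have hn1 : (1:ℝ) ≤ Real.sqrt n := by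
    rw [show (1:ℝ) = Real.sqrt 1 by simp]
    exact Real.sqrt_le_sqrt (by exact_mod_cast hn)
  set a := (Real.sqrt n)⁻¹ • x + μ with ha
  have hnorm : ‖a - μ‖ = ‖x‖ / Real.sqrt n := by
    simp [ha, norm_smul, abs_of_pos hn0, div_eq_inv_mul]
  by_cases hx : ‖x‖ ≤ Real.sqrt n
  · rw [if_pos hx]
    have hmem : a ∈ Metric.closedBall μ 1 := by
      rw [Metric.mem_closedBall, dist_eq_norm, hnorm]
      exact div_le_one_of_le₀ hx hn0.le
    have hbound : ∀ y ∈ Metric.closedBall μ 1, ‖fderiv ℝ f y‖ ≤ M := fun y hy => hy₀ hy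
    have hmvt : ‖f a - f μ‖ ≤ M * ‖a - μ‖ :=
      (convex_closedBall μ 1).norm_image_sub_le_of_norm_fderiv_le
        (fun y _ => (hf.differentiable one_ne_zero).differentiableAt) hbound
        (Metric.mem_closedBall_self zero_le_one) hmem
    rw [abs_mul, abs_of_pos hn0, Real.norm_eq_abs] at *
    calc Real.sqrt n * |f a - f μ| ≤ Real.sqrt n * (M * (‖x‖ / Real.sqrt n)) := by
          rw [← hnorm]; exact mul_le_mul_of_nonneg_left hmvt hn0.le
      _ = M * ‖x‖ := by field_simp
      _ ≤ (M + C₂) * ‖x‖ := by nlinarith [norm_nonneg x]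
  · rw [if_neg hx]
    push_neg at hx
    set t : ℝ := ‖x‖ / Real.sqrt n with ht
    have ht1 : 1 < t := (one_lt_div hn0).2 hx
    have ht0 : 0 < t := by linarith
    have htk : 1 ≤ t ^ k := one_le_pow₀ ht1.le
    have hak : ‖a‖ ≤ (1 + ‖μ‖) * t := by
      calc ‖a‖ ≤ ‖a - μ‖ + ‖μ‖ := by
            simpa using norm_add_le (a - μ) μ
        _ = t + ‖μ‖ := by rw [hnorm]
        _ ≤ (1 + ‖μ‖) * t := by nlinarith [mul_le_mul_of_nonneg_left ht1.le (norm_nonneg μ)]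
    have hfa : |f a - f μ| ≤ C₂ * t ^ k := by
      calc |f a - f μ| ≤ |f a| + |f μ| := abs_sub _ _
        _ ≤ C * (1 + ‖a‖ ^ k) + C * (1 + ‖μ‖ ^ k) := add_le_add (hgrowth a) (hgrowth μ)
        _ ≤ C * (1 + ((1 + ‖μ‖) * t) ^ k) + C * (1 + ‖μ‖ ^ k) := by
            have : ‖a‖ ^ k ≤ ((1 + ‖μ‖) * t) ^ k :=
              pow_le_pow_left₀ (norm_nonneg _) hak k
            nlinarith
        _ ≤ C₂ * t ^ k := by
            rw [hC₂, mul_pow]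
            have h1 : (1:ℝ) * 1 ≤ 1 * t ^ k := by nlinarith
            have h2 : ‖μ‖ ^ k * 1 ≤ ‖μ‖ ^ k * t ^ k := by
              have := pow_nonneg (norm_nonneg μ) k
              nlinarith
            nlinarith
    have hsn : Real.sqrt n ^ k = Real.sqrt n ^ (k - 1) * Real.sqrt n := by
      rw [← pow_succ]
      congr 1
      omega
    have hpow : Real.sqrt n * t ^ k = ‖x‖ ^ k / Real.sqrt n ^ (k - 1) := by
      rw [ht, div_pow, hsn]
      field_simp
    rw [abs_mul, abs_of_pos hn0]
    calc Real.sqrt n * |f a - f μ| ≤ Real.sqrt n * (C₂ * t ^ k) :=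
          mul_le_mul_of_nonneg_left hfa hn0.le
      _ = C₂ * (‖x‖ ^ k / Real.sqrt n ^ (k - 1)) := by rw [← hpow]; ring
      _ ≤ (M + C₂) * (‖x‖ ^ k / Real.sqrt n ^ (k - 1)) := by
          have : 0 ≤ ‖x‖ ^ k / Real.sqrt n ^ (k - 1) := by positivity
          nlinarith
end

section
/- Under the assumptions of the previous Taylor remainder bounds, if X^{(n)} ~ N(μ^{(n)}, Σ^{(n)}) with μ^{(n)} ∈ B(μ, ε/2) and the eigenvalues of a^{(n)} Σ^{(n)} bounded above and below in (0, ∞) with a^{(n)} → ∞, then the rescaled remainder satisfies E[(√a^{(n)} R₁^{(n)}(X^{(n)}))²] ≤ C/a^{(n)} for a constant C independent of n, where R₁^{(n)} is the first-order Taylor remainder of f at μ^{(n)}; consequently Var(E[√a^{(n)} R₁^{(n)}(X^{(n)}) | X_u^{(n)}]) ≤ C/a^{(n)} for every subset u. -/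
open MeasureTheory ProbabilityTheory Filter
open scoped NNReal ENNReal

/-- The sub-σ-algebra generated by the subvector `(X i)_{i ∈ u}`. -/
noncomputable def subSigma {Ω : Type*} [MeasurableSpace Ω] {p : ℕ}
    (X : Ω → EuclideanSpace ℝ (Fin p)) (u : Finset (Fin p)) : MeasurableSpace Ω :=
  MeasurableSpace.comap (fun ω => (fun i : u => X ω i)) inferInstance

/-- `X` is a Gaussian vector with mean `m` and covariance `S`:
every linear form of `X` has the corresponding one-dimensional Gaussian law. -/
def IsGaussianVec {Ω : Type*} [MeasurableSpace Ω] {p : ℕ} (P : Measure Ω)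
    (X : Ω → EuclideanSpace ℝ (Fin p)) (m : Fin p → ℝ)
    (S : Matrix (Fin p) (Fin p) ℝ) : Prop :=
  ∀ c : Fin p → ℝ,
    Measure.map (fun ω => ∑ i, c i * X ω i) P =
      gaussianReal (∑ i, c i * m i) (Real.toNNReal (∑ i, ∑ j, c i * S i j * c j))



private lemma gauss_moment (c : ℝ) (v : ℝ≥0) (hv : v ≠ 0) (m : ℕ) :
    Integrable (fun x => (x - c) ^ (2 * m)) (gaussianReal c v) ∧
    ∫ x, (x - c) ^ (2 * m) ∂(gaussianReal c v)
      ≤ Real.sqrt 2 * m.factorial * (4 * (v : ℝ)) ^ m := by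
  have hv0 : (0:ℝ) < v := NNReal.coe_pos.mpr (pos_iff_ne_zero.mpr hv)
  have hpi : (0:ℝ) < 2 * Real.pi * v := by positivity
  have hnn : ∀ x : ℝ, 0 ≤ (x - c) ^ (2 * m) := fun x => by rw [pow_mul]; positivity
  set K : ℝ := (Real.sqrt (2 * Real.pi * v))⁻¹ * (4 * (v : ℝ)) ^ m * m.factorial with hK
  have key : ∀ x : ℝ, gaussianPDFReal c v x * (x - c) ^ (2 * m)
      ≤ K * Real.exp (-(x - c) ^ 2 / (4 * v)) := by
    intro x
    have ht : 0 ≤ (x - c) ^ 2 / (4 * (v:ℝ)) := by positivity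
    set t : ℝ := (x - c) ^ 2 / (4 * (v:ℝ)) with hts
    have hxc : (x - c) ^ (2 * m) = (4 * (v:ℝ)) ^ m * t ^ m := by
      rw [pow_mul, ← mul_pow]
      congr 1
      rw [hts]; field_simp
    have hexp : Real.exp (-(x - c) ^ 2 / (2 * v)) = Real.exp (-t) * Real.exp (-t) := by
      rw [← Real.exp_add]
      congr 1
      rw [hts]; field_simp; ring
    have htm : t ^ m * Real.exp (-t) ≤ (m.factorial : ℝ) := by
      have h1 := Real.pow_div_factorial_le_exp (x := t) ht m
      rw [div_le_iff₀ (by positivity)] at h1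
      rw [Real.exp_neg, mul_inv_le_iff₀ (Real.exp_pos t)]
      nlinarith [Real.exp_pos t]
    have hneg : -(x - c) ^ 2 / (4 * (v:ℝ)) = -t := by rw [hts]; ring
    calc gaussianPDFReal c v x * (x - c) ^ (2 * m)
        = (Real.sqrt (2 * Real.pi * v))⁻¹ * (4 * (v:ℝ)) ^ m
            * ((t ^ m * Real.exp (-t)) * Real.exp (-t)) := by
          rw [gaussianPDFReal, hexp, hxc]; ring
      _ ≤ (Real.sqrt (2 * Real.pi * v))⁻¹ * (4 * (v:ℝ)) ^ m
            * ((m.factorial : ℝ) * Real.exp (-t)) := by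
          refine mul_le_mul_of_nonneg_left ?_ (by positivity)
          exact mul_le_mul_of_nonneg_right htm (Real.exp_pos _).le
      _ = K * Real.exp (-(x - c) ^ 2 / (4 * v)) := by rw [hneg, hK]; ring
  have hbpos : (0:ℝ) < (4 * (v:ℝ))⁻¹ := by positivity
  have hfun : (fun x : ℝ => Real.exp (-(x - c) ^ 2 / (4 * (v:ℝ))))
      = fun x : ℝ => Real.exp (-(4 * (v:ℝ))⁻¹ * (x - c) ^ 2) := by
    funext x; congr 1; field_simp
  have hdom : Integrable (fun x : ℝ => Real.exp (-(x - c) ^ 2 / (4 * (v:ℝ)))) := by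
    rw [hfun]
    simpa using (integrable_exp_neg_mul_sq hbpos).comp_sub_right c
  have hdomint : (∫ x : ℝ, Real.exp (-(x - c) ^ 2 / (4 * (v:ℝ))))
      = Real.sqrt (Real.pi / (4 * (v:ℝ))⁻¹) := by
    rw [hfun]
    rw [integral_sub_right_eq_self (μ := volume) (fun a => Real.exp (-(4 * (v:ℝ))⁻¹ * a ^ 2)) c]
    exact integral_gaussian _
  have hsqrt : K * Real.sqrt (Real.pi / (4 * (v:ℝ))⁻¹)
      = Real.sqrt 2 * m.factorial * (4 * (v : ℝ)) ^ m := by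
    have h1 : Real.pi / (4 * (v:ℝ))⁻¹ = 2 * (2 * Real.pi * v) := by field_simp; ring
    rw [h1, Real.sqrt_mul (by norm_num : (0:ℝ) ≤ 2), hK]
    have h2 : Real.sqrt (2 * Real.pi * v) ≠ 0 := by positivity
    field_simp
  have hpdfnn : ∀ x, 0 ≤ gaussianPDFReal c v x := gaussianPDFReal_nonneg c v
  have hmeas : Measurable (fun x : ℝ => gaussianPDFReal c v x * (x - c) ^ (2 * m)) :=
    (measurable_gaussianPDFReal c v).mul ((measurable_id.sub_const c).pow_const _)
  have hprod : Integrable (fun x : ℝ => gaussianPDFReal c v x * (x - c) ^ (2 * m)) := by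
    refine (hdom.const_mul K).mono' hmeas.aestronglyMeasurable (ae_of_all _ fun x => ?_)
    rw [Real.norm_eq_abs, abs_of_nonneg (mul_nonneg (hpdfnn x) (hnn x))]
    exact key x
  have hprodint : (∫ x : ℝ, gaussianPDFReal c v x * (x - c) ^ (2 * m))
      ≤ Real.sqrt 2 * m.factorial * (4 * (v : ℝ)) ^ m := by
    calc (∫ x : ℝ, gaussianPDFReal c v x * (x - c) ^ (2 * m))
        ≤ ∫ x : ℝ, K * Real.exp (-(x - c) ^ 2 / (4 * (v:ℝ))) :=
          integral_mono hprod (hdom.const_mul K) key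
      _ = K * Real.sqrt (Real.pi / (4 * (v:ℝ))⁻¹) := by rw [integral_const_mul, hdomint]
      _ = _ := hsqrt
  have hgm : Measurable (fun x => (gaussianPDFReal c v x).toNNReal) :=
    (measurable_gaussianPDFReal c v).real_toNNReal
  have hrepr : gaussianReal c v
      = volume.withDensity (fun x => ((gaussianPDFReal c v x).toNNReal : ℝ≥0∞)) := by
    rw [gaussianReal_of_var_ne_zero c hv]; rfl
  have hsmul : (fun x : ℝ => (gaussianPDFReal c v x).toNNReal • (x - c) ^ (2 * m))
      = fun x : ℝ => gaussianPDFReal c v x * (x - c) ^ (2 * m) := by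
    funext x
    rw [NNReal.smul_def, Real.coe_toNNReal _ (hpdfnn x), smul_eq_mul]
  constructor
  · rw [hrepr, integrable_withDensity_iff_integrable_smul hgm, hsmul]
    exact hprod
  · rw [hrepr, integral_withDensity_eq_integral_smul hgm, hsmul]
    exact hprodint

private lemma sum_pow_le_card_mul {p : ℕ} (y : Fin p → ℝ) (hy : ∀ i, 0 ≤ y i) (n : ℕ) :
    (∑ i, y i) ^ (n + 1) ≤ (p : ℝ) ^ n * ∑ i, y i ^ (n + 1) := by
  rcases Nat.eq_zero_or_pos p with hp | hp
  · subst hp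
    simp
  · have hcast : (0:ℝ) < (p:ℝ) := by exact_mod_cast hp
    have h := pow_sum_div_card_le_sum_pow (s := Finset.univ) (f := y) (fun i _ => hy i) n
    rw [Finset.card_univ, Fintype.card_fin] at h
    rw [div_le_iff₀ (by positivity)] at h
    calc (∑ i, y i) ^ (n+1) ≤ (∑ i, y i ^ (n+1)) * (p:ℝ)^n := h
      _ = _ := by ring

/-- For Gaussian `X⁽ⁿ⁾ ~ N(μ⁽ⁿ⁾, Σ⁽ⁿ⁾)` with `μ⁽ⁿ⁾ ∈ B(μ, ε/2)` and eigenvalues of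
`a⁽ⁿ⁾Σ⁽ⁿ⁾` bounded in `(0,∞)`, the rescaled Taylor remainder satisfies
`E[(√a⁽ⁿ⁾ R₁⁽ⁿ⁾(X⁽ⁿ⁾))²] ≤ C/a⁽ⁿ⁾` and hence
`Var(E[√a⁽ⁿ⁾ R₁⁽ⁿ⁾(X⁽ⁿ⁾) | X_u⁽ⁿ⁾]) ≤ C/a⁽ⁿ⁾` for every `u`, with `C` independent of `n`. -/
theorem stmt8 {Ω : Type*} [MeasurableSpace Ω] (P : Measure Ω) [IsProbabilityMeasure P]
    {p : ℕ} (μ : EuclideanSpace ℝ (Fin p)) (ε : ℝ) (hε : 0 < ε)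
    (k : ℕ) (hk : 2 ≤ k)
    (X : ℕ → Ω → EuclideanSpace ℝ (Fin p)) (hX : ∀ n, Measurable (X n))
    (μn : ℕ → EuclideanSpace ℝ (Fin p)) (Sn : ℕ → Matrix (Fin p) (Fin p) ℝ)
    (a : ℕ → ℝ) (ha : ∀ n, 0 < a n)
    (hatop : Filter.Tendsto a Filter.atTop Filter.atTop)
    (hμn : ∀ n, μn n ∈ Metric.ball μ (ε / 2))
    (lmin lmax : ℝ) (hl : 0 < lmin)
    (heig : ∀ n (v : EuclideanSpace ℝ (Fin p)),
      lmin * ‖v‖ ^ 2 ≤ a n * ∑ i, ∑ j, v i * Sn n i j * v j ∧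
      a n * ∑ i, ∑ j, v i * Sn n i j * v j ≤ lmax * ‖v‖ ^ 2)
    (hGauss : ∀ n, IsGaussianVec P (X n) (fun i => μn n i) (Sn n))
    (R : ℕ → EuclideanSpace ℝ (Fin p) → ℝ) (hR : ∀ n, Measurable (R n))
    (C₁ C₂ : ℝ)
    (hR1 : ∀ n x, ‖x - μn n‖ ≤ ε / 2 → |R n x| ≤ C₁ * ‖x - μn n‖ ^ 2)
    (hR2 : ∀ n x, ε / 2 < ‖x - μn n‖ → |R n x| ≤ C₂ * ‖x - μn n‖ ^ k) :
    ∃ C : ℝ, ∀ n,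
      (∫ ω, (Real.sqrt (a n) * R n (X n ω)) ^ 2 ∂P) ≤ C / a n ∧
      ∀ u : Finset (Fin p),
        variance (P[fun ω => Real.sqrt (a n) * R n (X n ω) | subSigma (X n) u]) P
          ≤ C / a n := by
  classical
  -- the constant controlling `a n ^ (2 - k)`
  obtain ⟨N, hN⟩ := Filter.eventually_atTop.mp (hatop.eventually_ge_atTop 1)
  set B : ℝ := 1 + ∑ j ∈ Finset.range N, ((a j)⁻¹) ^ (k - 2) with hBdef
  have hBpos : (0:ℝ) < B := by
    have h0 : 0 ≤ ∑ j ∈ Finset.range N, ((a j)⁻¹) ^ (k - 2) :=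
      Finset.sum_nonneg fun j _ => pow_nonneg (inv_nonneg.mpr (ha j).le) _
    rw [hBdef]; linarith
  have hBk : ∀ n, ((a n)⁻¹) ^ (k - 2) ≤ B := by
    intro n
    rcases lt_or_ge n N with h | h
    · have h1 := Finset.single_le_sum (f := fun j => ((a j)⁻¹) ^ (k - 2))
        (fun j _ => pow_nonneg (inv_nonneg.mpr (ha j).le) _) (Finset.mem_range.mpr h)
      rw [hBdef]; linarith
    · have h1 : (1:ℝ) ≤ a n := hN n h
      have h2 : ((a n)⁻¹) ^ (k - 2) ≤ 1 :=
        pow_le_one₀ (by positivity) (inv_le_one_of_one_le₀ h1)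
      rw [hBdef]
      have h0 : 0 ≤ ∑ j ∈ Finset.range N, ((a j)⁻¹) ^ (k - 2) :=
        Finset.sum_nonneg fun j _ => pow_nonneg (inv_nonneg.mpr (ha j).le) _
      linarith
  have hC2B : (0:ℝ) ≤ C₂ ^ 2 * B := mul_nonneg (sq_nonneg _) hBpos.le
  -- coordinate functions are measurable
  have hXi : ∀ n (i : Fin p), Measurable fun ω => X n ω i := fun n i =>
    (measurable_pi_apply i).comp ((WithLp.measurable_ofLp _ _).comp (hX n))
  -- one-dimensional laws of the coordinates
  have law : ∀ n (i : Fin p),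
      Measure.map (fun ω => X n ω i) P = gaussianReal (μn n i) ((Sn n i i).toNNReal) := by
    intro n i
    have h := hGauss n (fun j => if j = i then 1 else 0)
    simpa [ite_mul, mul_ite, mul_one, mul_zero, one_mul, zero_mul,
      Finset.sum_ite_eq', Finset.mem_univ] using h
  -- diagonal entries of the covariance
  have hS : ∀ n (i : Fin p), lmin ≤ a n * Sn n i i ∧ a n * Sn n i i ≤ lmax := by
    intro n i
    have h := heig n (EuclideanSpace.single i (1:ℝ))
    simpa [EuclideanSpace.single_apply, EuclideanSpace.norm_single, ite_mul, mul_ite,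
      mul_one, mul_zero, one_mul, zero_mul, Finset.sum_ite_eq', Finset.mem_univ] using h
  have hSpos : ∀ n (i : Fin p), 0 < Sn n i i := by
    intro n i
    by_contra hc
    push_neg at hc
    have h2 : a n * Sn n i i ≤ 0 := mul_nonpos_iff.mpr (Or.inl ⟨(ha n).le, hc⟩)
    linarith [(hS n i).1]
  -- moments of the coordinates
  have moment : ∀ n (i : Fin p) (m : ℕ),
      Integrable (fun ω => (X n ω i - μn n i) ^ (2 * m)) P ∧
      (∫ ω, (X n ω i - μn n i) ^ (2 * m) ∂P)
        ≤ Real.sqrt 2 * m.factorial * (4 * Sn n i i) ^ m := by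
    intro n i m
    have hSp := hSpos n i
    have hvne : (Sn n i i).toNNReal ≠ 0 := by
      simp [Real.toNNReal_eq_zero, not_le, hSp]
    have hco : (((Sn n i i).toNNReal : ℝ≥0) : ℝ) = Sn n i i := Real.coe_toNNReal _ hSp.le
    obtain ⟨hint, hbound⟩ := gauss_moment (μn n i) ((Sn n i i).toNNReal) hvne m
    rw [hco] at hbound
    have hfmeas : AEStronglyMeasurable (fun x : ℝ => (x - μn n i) ^ (2 * m))
        (Measure.map (fun ω => X n ω i) P) :=
      ((measurable_id.sub_const _).pow_const _).aestronglyMeasurable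
    constructor
    · have h' : Integrable (fun x => (x - μn n i) ^ (2 * m))
          (Measure.map (fun ω => X n ω i) P) := by
        rw [law n i]; exact hint
      have h'' := (integrable_map_measure hfmeas (hXi n i).aemeasurable).mp h'
      exact h''
    · have heq : (∫ ω, (X n ω i - μn n i) ^ (2 * m) ∂P)
          = ∫ y, (y - μn n i) ^ (2 * m) ∂(gaussianReal (μn n i) ((Sn n i i).toNNReal)) := by
        rw [← law n i, integral_map (hXi n i).aemeasurable hfmeas]
      rw [heq]; exact hbound
  -- the squared norm as a sum of squares
  have hnormsq : ∀ n (ω : Ω), ‖X n ω - μn n‖ ^ 2 = ∑ i, (X n ω i - μn n i) ^ 2 := by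
    intro n ω
    rw [EuclideanSpace.norm_eq, Real.sq_sqrt (Finset.sum_nonneg fun i _ => by positivity)]
    refine Finset.sum_congr rfl fun i _ => ?_
    rw [Real.norm_eq_abs, sq_abs]
    rfl
  -- moments of the rescaled squared norm
  have keymoment : ∀ (n : ℕ) (m : ℕ), 1 ≤ m →
      Integrable (fun ω => (a n * ‖X n ω - μn n‖ ^ 2) ^ m) P ∧
      (∫ ω, (a n * ‖X n ω - μn n‖ ^ 2) ^ m ∂P)
        ≤ Real.sqrt 2 * m.factorial * (4 * lmax) ^ m * (p : ℝ) ^ m := by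
    intro n m hm1
    obtain ⟨j, rfl⟩ : ∃ j, m = j + 1 := ⟨m - 1, by omega⟩
    set m := j + 1 with hmdef
    have hGint : Integrable (fun ω => (a n) ^ m * ((p:ℝ) ^ j *
        ∑ i, (X n ω i - μn n i) ^ (2 * m))) P :=
      ((integrable_finset_sum _ fun i _ => (moment n i m).1).const_mul _).const_mul _
    have hpt : ∀ ω, (a n * ‖X n ω - μn n‖ ^ 2) ^ m
        ≤ (a n) ^ m * ((p:ℝ) ^ j * ∑ i, (X n ω i - μn n i) ^ (2 * m)) := by
      intro ω
      rw [mul_pow, hnormsq n ω]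
      refine mul_le_mul_of_nonneg_left ?_ (pow_nonneg (ha n).le m)
      have h := sum_pow_le_card_mul (fun i => (X n ω i - μn n i) ^ 2) (fun i => sq_nonneg _) j
      calc (∑ i, (X n ω i - μn n i) ^ 2) ^ m
          ≤ (p:ℝ) ^ j * ∑ i, ((X n ω i - μn n i) ^ 2) ^ m := h
        _ = (p:ℝ) ^ j * ∑ i, (X n ω i - μn n i) ^ (2 * m) := by
            simp_rw [← pow_mul]
    have hmeasb : Measurable (fun ω => (a n * ‖X n ω - μn n‖ ^ 2) ^ m) := by
      have h1 : Measurable fun ω => X n ω - μn n := (hX n).sub measurable_const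
      exact (measurable_const.mul (h1.norm.pow_const 2)).pow_const m
    have hint : Integrable (fun ω => (a n * ‖X n ω - μn n‖ ^ 2) ^ m) P := by
      refine hGint.mono' hmeasb.aestronglyMeasurable (ae_of_all _ fun ω => ?_)
      rw [Real.norm_eq_abs,
        abs_of_nonneg (pow_nonneg (mul_nonneg (ha n).le (by positivity)) m)]
      exact hpt ω
    refine ⟨hint, ?_⟩
    have han : (0:ℝ) < a n := ha n
    calc (∫ ω, (a n * ‖X n ω - μn n‖ ^ 2) ^ m ∂P)
        ≤ ∫ ω, (a n) ^ m * ((p:ℝ) ^ j * ∑ i, (X n ω i - μn n i) ^ (2 * m)) ∂P :=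
          integral_mono hint hGint hpt
      _ = (a n) ^ m * ((p:ℝ) ^ j * ∑ i, ∫ ω, (X n ω i - μn n i) ^ (2 * m) ∂P) := by
          rw [integral_const_mul, integral_const_mul,
            integral_finset_sum _ fun i _ => (moment n i m).1]
      _ ≤ (a n) ^ m * ((p:ℝ) ^ j *
            ((p:ℝ) * (Real.sqrt 2 * m.factorial * (4 * lmax) ^ m / (a n) ^ m))) := by
          refine mul_le_mul_of_nonneg_left (mul_le_mul_of_nonneg_left ?_ (by positivity))
            (by positivity)
          have hterm : ∀ i : Fin p, (∫ ω, (X n ω i - μn n i) ^ (2 * m) ∂P)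
              ≤ Real.sqrt 2 * m.factorial * (4 * lmax) ^ m / (a n) ^ m := by
            intro i
            refine le_trans (moment n i m).2 ?_
            rw [le_div_iff₀ (by positivity)]
            have hSp := hSpos n i
            have h1 : (4 * Sn n i i * a n) ^ m ≤ (4 * lmax) ^ m := by
              apply pow_le_pow_left₀ (by positivity)
              nlinarith [(hS n i).2]
            calc Real.sqrt 2 * m.factorial * (4 * Sn n i i) ^ m * (a n) ^ m
                = Real.sqrt 2 * m.factorial * (4 * Sn n i i * a n) ^ m := by
                  rw [mul_pow]; ring
              _ ≤ Real.sqrt 2 * m.factorial * (4 * lmax) ^ m :=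
                  mul_le_mul_of_nonneg_left h1 (by positivity)
          calc (∑ i, ∫ ω, (X n ω i - μn n i) ^ (2 * m) ∂P)
              ≤ ∑ _i : Fin p, (Real.sqrt 2 * m.factorial * (4 * lmax) ^ m / (a n) ^ m) :=
                Finset.sum_le_sum fun i _ => hterm i
            _ = (p:ℝ) * (Real.sqrt 2 * m.factorial * (4 * lmax) ^ m / (a n) ^ m) := by
                rw [Finset.sum_const, Finset.card_univ, Fintype.card_fin, nsmul_eq_mul]
      _ = Real.sqrt 2 * m.factorial * (4 * lmax) ^ m * (p : ℝ) ^ m := by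
          have hpow : (a n) ^ m ≠ 0 := by positivity
          field_simp
          ring
  -- pointwise bound on the rescaled remainder
  have hptR : ∀ n (x : EuclideanSpace ℝ (Fin p)), (Real.sqrt (a n) * R n x) ^ 2
      ≤ (C₁ ^ 2 * (a n * ‖x - μn n‖ ^ 2) ^ 2
          + (C₂ ^ 2 * B) * (a n * ‖x - μn n‖ ^ 2) ^ k) / a n := by
    intro n x
    have han := ha n
    have hLHS : (Real.sqrt (a n) * R n x) ^ 2 = a n * (R n x) ^ 2 := by
      rw [mul_pow, Real.sq_sqrt han.le]
    rw [hLHS, le_div_iff₀ han]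
    rcases le_or_gt ‖x - μn n‖ (ε/2) with hcase | hcase
    · have h1 := hR1 n x hcase
      have h2 : (R n x) ^ 2 ≤ C₁ ^ 2 * ‖x - μn n‖ ^ 4 := by
        have h3 := pow_le_pow_left₀ (abs_nonneg _) h1 2
        rw [sq_abs] at h3
        calc (R n x) ^ 2 ≤ (C₁ * ‖x - μn n‖ ^ 2) ^ 2 := h3
          _ = C₁ ^ 2 * ‖x - μn n‖ ^ 4 := by ring
      have h3 : 0 ≤ (C₂ ^ 2 * B) * (a n * ‖x - μn n‖ ^ 2) ^ k :=
        mul_nonneg hC2B (pow_nonneg (mul_nonneg han.le (by positivity)) k)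
      nlinarith [mul_le_mul_of_nonneg_left h2 (mul_pos han han).le]
    · have h2 : (R n x) ^ 2 ≤ C₂ ^ 2 * (‖x - μn n‖ ^ k) ^ 2 := by
        have h3 := pow_le_pow_left₀ (abs_nonneg _) (hR2 n x hcase) 2
        rw [sq_abs] at h3
        calc (R n x) ^ 2 ≤ (C₂ * ‖x - μn n‖ ^ k) ^ 2 := h3
          _ = C₂ ^ 2 * (‖x - μn n‖ ^ k) ^ 2 := by ring
      have hake : a n ^ (k - 2) * a n ^ 2 = a n ^ k := by
        rw [← pow_add]; congr 1; omega
      have h5 : (1:ℝ) ≤ B * a n ^ (k - 2) := by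
        have h6 := hBk n
        have h7 : (0:ℝ) < a n ^ (k - 2) := by positivity
        rw [inv_pow] at h6
        calc (1:ℝ) = (a n ^ (k - 2))⁻¹ * a n ^ (k - 2) := (inv_mul_cancel₀ h7.ne').symm
          _ ≤ B * a n ^ (k - 2) := mul_le_mul_of_nonneg_right h6 h7.le
      have h8 : (a n * ‖x - μn n‖ ^ 2) ^ k = a n ^ k * (‖x - μn n‖ ^ k) ^ 2 := by
        rw [mul_pow, ← pow_mul, ← pow_mul, mul_comm 2 k]
      have h9 : 0 ≤ C₁ ^ 2 * (a n * ‖x - μn n‖ ^ 2) ^ 2 :=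
        mul_nonneg (sq_nonneg _) (sq_nonneg _)
      have h10 : a n * (R n x) ^ 2 * a n
          ≤ C₂ ^ 2 * B * (a n ^ k * (‖x - μn n‖ ^ k) ^ 2) := by
        have h11 : a n * (R n x) ^ 2 * a n
            ≤ a n ^ 2 * (C₂ ^ 2 * (‖x - μn n‖ ^ k) ^ 2) := by
          nlinarith [mul_le_mul_of_nonneg_left h2 (mul_pos han han).le]
        have h12 : a n ^ 2 * (C₂ ^ 2 * (‖x - μn n‖ ^ k) ^ 2) * 1
            ≤ a n ^ 2 * (C₂ ^ 2 * (‖x - μn n‖ ^ k) ^ 2) * (B * a n ^ (k - 2)) :=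
          mul_le_mul_of_nonneg_left h5 (by positivity)
        have h13 : a n ^ 2 * (C₂ ^ 2 * (‖x - μn n‖ ^ k) ^ 2) * (B * a n ^ (k - 2))
            = C₂ ^ 2 * B * (a n ^ k * (‖x - μn n‖ ^ k) ^ 2) := by
          rw [← hake]; ring
        calc a n * (R n x) ^ 2 * a n ≤ a n ^ 2 * (C₂ ^ 2 * (‖x - μn n‖ ^ k) ^ 2) := h11
          _ = a n ^ 2 * (C₂ ^ 2 * (‖x - μn n‖ ^ k) ^ 2) * 1 := (mul_one _).symm
          _ ≤ _ := h12
          _ = _ := h13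
      calc a n * (R n x) ^ 2 * a n
          ≤ C₂ ^ 2 * B * (a n ^ k * (‖x - μn n‖ ^ k) ^ 2) := h10
        _ = C₂ ^ 2 * B * (a n * ‖x - μn n‖ ^ 2) ^ k := by rw [h8]
        _ ≤ _ := le_add_of_nonneg_left h9
  -- the constant
  refine ⟨C₁ ^ 2 * (Real.sqrt 2 * (Nat.factorial 2) * (4 * lmax) ^ 2 * (p : ℝ) ^ 2)
    + C₂ ^ 2 * B * (Real.sqrt 2 * (Nat.factorial k) * (4 * lmax) ^ k * (p : ℝ) ^ k),
    fun n => ?_⟩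
  obtain ⟨km2int, km2⟩ := keymoment n 2 (by norm_num)
  obtain ⟨kmkint, kmk⟩ := keymoment n k (by omega)
  have hRHSint : Integrable (fun ω => (C₁ ^ 2 * (a n * ‖X n ω - μn n‖ ^ 2) ^ 2
      + (C₂ ^ 2 * B) * (a n * ‖X n ω - μn n‖ ^ 2) ^ k) / a n) P :=
    ((km2int.const_mul _).add (kmkint.const_mul _)).div_const _
  have hYmeas : Measurable (fun ω => Real.sqrt (a n) * R n (X n ω)) :=
    measurable_const.mul ((hR n).comp (hX n))
  have hfirst : (∫ ω, (Real.sqrt (a n) * R n (X n ω)) ^ 2 ∂P)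
      ≤ (C₁ ^ 2 * (Real.sqrt 2 * (Nat.factorial 2) * (4 * lmax) ^ 2 * (p : ℝ) ^ 2)
        + C₂ ^ 2 * B * (Real.sqrt 2 * (Nat.factorial k) * (4 * lmax) ^ k * (p : ℝ) ^ k))
          / a n := by
    calc (∫ ω, (Real.sqrt (a n) * R n (X n ω)) ^ 2 ∂P)
        ≤ ∫ ω, (C₁ ^ 2 * (a n * ‖X n ω - μn n‖ ^ 2) ^ 2
            + (C₂ ^ 2 * B) * (a n * ‖X n ω - μn n‖ ^ 2) ^ k) / a n ∂P :=
          integral_mono_of_nonneg (ae_of_all _ fun ω => sq_nonneg _) hRHSint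
            (ae_of_all _ fun ω => hptR n (X n ω))
      _ = (C₁ ^ 2 * (∫ ω, (a n * ‖X n ω - μn n‖ ^ 2) ^ 2 ∂P)
            + (C₂ ^ 2 * B) * (∫ ω, (a n * ‖X n ω - μn n‖ ^ 2) ^ k ∂P)) / a n := by
          rw [integral_div, integral_add (km2int.const_mul _) (kmkint.const_mul _),
            integral_const_mul, integral_const_mul]
      _ ≤ _ := by
          have h1 := mul_le_mul_of_nonneg_left km2 (sq_nonneg C₁)
          have h2 := mul_le_mul_of_nonneg_left kmk hC2B
          exact div_le_div_of_nonneg_right (by linarith) (ha n).le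
  refine ⟨hfirst, fun u => ?_⟩
  -- conditional expectation part
  have hm : subSigma (X n) u ≤ ‹MeasurableSpace Ω› := by
    have hmeas : Measurable (fun ω => (fun i : u => X n ω i)) :=
      measurable_pi_lambda _ fun i => hXi n i
    exact hmeas.comap_le
  haveI : SigmaFinite (P.trim hm) := inferInstance
  have hYsq : Integrable (fun ω => (Real.sqrt (a n) * R n (X n ω)) ^ 2) P := by
    refine hRHSint.mono' (hYmeas.pow_const 2).aestronglyMeasurable (ae_of_all _ fun ω => ?_)
    rw [Real.norm_eq_abs, abs_of_nonneg (sq_nonneg _)]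
    exact hptR n (X n ω)
  have hY2 : MemLp (fun ω => Real.sqrt (a n) * R n (X n ω)) 2 P :=
    (memLp_two_iff_integrable_sq hYmeas.aestronglyMeasurable).mpr hYsq
  have hYint : Integrable (fun ω => Real.sqrt (a n) * R n (X n ω)) P :=
    hY2.integrable one_le_two
  set fL := hY2.toLp (fun ω => Real.sqrt (a n) * R n (X n ω)) with hfLdef
  set gL : Lp ℝ 2 P := (condExpL2 ℝ ℝ hm fL : Lp ℝ 2 P) with hgLdef
  have hcond : (P[fun ω => Real.sqrt (a n) * R n (X n ω) | subSigma (X n) u]) =ᵐ[P] gL := by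
    refine (ae_eq_condExp_of_forall_setIntegral_eq hm hYint ?_ ?_ ?_).symm
    · intro s _ hμs
      exact integrableOn_condExpL2_of_measure_ne_top hm hμs.ne fL
    · intro s hs hμs
      rw [integral_condExpL2_eq hm fL hs hμs.ne]
      exact integral_congr_ae (ae_restrict_of_ae hY2.coeFn_toLp)
    · exact aestronglyMeasurable_condExpL2 hm fL
  have hgmeas : AEStronglyMeasurable
      (P[fun ω => Real.sqrt (a n) * R n (X n ω) | subSigma (X n) u]) P :=
    (stronglyMeasurable_condExp.mono hm).aestronglyMeasurable
  have hvar := variance_le_expectation_sq (μ := P) hgmeas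
  have hsq : (∫ ω, ((P[fun ω => Real.sqrt (a n) * R n (X n ω) | subSigma (X n) u]) ^ 2) ω ∂P)
      = ∫ ω, (gL ω) ^ 2 ∂P := by
    refine integral_congr_ae ?_
    filter_upwards [hcond] with ω hω
    simp [Pi.pow_apply, hω]
  have hinner : ∀ f : Lp ℝ 2 P, (∫ ω, (f ω) ^ 2 ∂P) = ‖f‖ ^ 2 := by
    intro f
    rw [← real_inner_self_eq_norm_sq, MeasureTheory.L2.inner_def]
    refine integral_congr_ae (ae_of_all _ fun ω => ?_)
    simp [RCLike.inner_apply, conj_trivial, sq]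
  have hnorm : (∫ ω, (gL ω) ^ 2 ∂P) ≤ ∫ ω, (Real.sqrt (a n) * R n (X n ω)) ^ 2 ∂P := by
    have h2 : (∫ ω, (Real.sqrt (a n) * R n (X n ω)) ^ 2 ∂P) = ‖fL‖ ^ 2 := by
      rw [← hinner fL]
      refine integral_congr_ae ?_
      filter_upwards [hY2.coeFn_toLp] with ω hω
      rw [hω]
    rw [hinner gL, h2]
    exact pow_le_pow_left₀ (norm_nonneg _) (norm_condExpL2_le hm fL) 2
  calc variance (P[fun ω => Real.sqrt (a n) * R n (X n ω) | subSigma (X n) u]) P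
      ≤ ∫ ω, ((P[fun ω => Real.sqrt (a n) * R n (X n ω) | subSigma (X n) u]) ^ 2) ω ∂P := hvar
    _ = ∫ ω, (gL ω) ^ 2 ∂P := hsq
    _ ≤ ∫ ω, (Real.sqrt (a n) * R n (X n ω)) ^ 2 ∂P := hnorm
    _ ≤ _ := hfirst
end

section
/- Let densities converge uniformly: suppose X* has a density f_{X*} bounded above by b and bounded below by a > 0 on [−K,K]^p, X̃_n has density f_n with ε_n := sup_x |f_{X*}(x) − f_n(x)| ≤ a/2. Then for all x with x_u ∈ [−K,K]^{|u|} and x ∈ [−K,K]^p, the conditional density ratios satisfy |f_{X*}(x)/f_{X*_u}(x_u) − f_n(x)/f_{n,u}(x_u)| ≤ C ε_n · f_{X*}(x)/f_{X*_u}(x_u), where C depends only on a and b, and f_{X*_u}, f_{n,u} are the marginal densities on [−K,K]^{|u|} (obtained by integrating over x_{−u} ∈ [−K,K]^{|−u|}). -/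
open MeasureTheory

/-- The marginal density on the coordinates in `u`, obtained by integrating a density `f`
over the coordinates outside `u`, restricted to the box `[-K,K]`. -/
noncomputable def marg {p : ℕ} (u : Finset (Fin p)) (K : ℝ)
    (f : (Fin p → ℝ) → ℝ) (x : Fin p → ℝ) : ℝ :=
  ∫ y in Set.univ.pi (fun _ : ↥(uᶜ) => Set.Icc (-K) K),
    f (fun i => if h : i ∈ uᶜ then y ⟨i, h⟩ else x i)

lemma ratio_est (a b εn V A A' B B' : ℝ) (ha : 0 < a) (hab : a ≤ b)
    (hV : 0 < V) (hε : 0 ≤ εn)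
    (hA1 : a ≤ A) (_hA2 : A ≤ b) (hAA : |A - A'| ≤ εn)
    (hB1 : a * V ≤ B) (hB2 : B ≤ b * V) (hB'1 : a / 2 * V ≤ B')
    (hBB : |B - B'| ≤ εn * V) :
    |A / B - A' / B'| ≤ (2 * b / a ^ 2 + 2 / a) * εn * (A / B) := by
  have hb0 : (0:ℝ) < b := lt_of_lt_of_le ha hab
  have hB : (0:ℝ) < B := lt_of_lt_of_le (by positivity) hB1
  have hB' : (0:ℝ) < B' := lt_of_lt_of_le (by positivity) hB'1
  have hA0 : (0:ℝ) < A := lt_of_lt_of_le ha hA1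
  have ha' : a ≠ 0 := ha.ne'
  have hb' : b ≠ 0 := (lt_of_lt_of_le ha hab).ne'
  have hV' : V ≠ 0 := hV.ne'
  have key : A / B - A' / B' = (A - A') / B' + A * (B' - B) / (B * B') := by
    field_simp
    ring
  rw [key]
  have h1 : |(A - A') / B'| ≤ 2 * b / a ^ 2 * εn * (A / B) := by
    rw [abs_div, abs_of_pos hB']
    have step1 : |A - A'| / B' ≤ εn / (a / 2 * V) := by
      gcongr
    refine step1.trans ?_
    rw [div_le_iff₀ (by positivity)]
    have hAB : a / (b * V) ≤ A / B := by
      apply div_le_div₀ hA0.le hA1 (by positivity) hB2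
    have hstep : 2 * b / a ^ 2 * εn * (a / (b * V)) * (a / 2 * V)
        ≤ 2 * b / a ^ 2 * εn * (A / B) * (a / 2 * V) :=
      mul_le_mul_of_nonneg_right
        (mul_le_mul_of_nonneg_left hAB (by positivity)) (by positivity)
    refine le_trans (le_of_eq ?_) hstep
    field_simp
  have h2 : |A * (B' - B) / (B * B')| ≤ 2 / a * εn * (A / B) := by
    rw [abs_div, abs_mul, abs_of_pos hA0, abs_of_pos (mul_pos hB hB')]
    have hBB' : |B' - B| ≤ εn * V := by rwa [abs_sub_comm]
    have step1 : A * |B' - B| / (B * B') ≤ A * (εn * V) / (B * (a / 2 * V)) := by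
      gcongr
    refine step1.trans (le_of_eq ?_)
    field_simp
  calc |(A - A') / B' + A * (B' - B) / (B * B')|
      ≤ |(A - A') / B'| + |A * (B' - B) / (B * B')| := abs_add_le _ _
    _ ≤ 2 * b / a ^ 2 * εn * (A / B) + 2 / a * εn * (A / B) := add_le_add h1 h2
    _ = (2 * b / a ^ 2 + 2 / a) * εn * (A / B) := by ring

/-- Stability of conditional density ratios under uniform perturbation of the density:
if `a ≤ f⋆ ≤ b` on `[-K,K]^p` and `sup |f⋆ − f_n| ≤ ε_n ≤ a/2`, then
`|f⋆(x)/f⋆_u(x_u) − f_n(x)/f_{n,u}(x_u)| ≤ C ε_n f⋆(x)/f⋆_u(x_u)` on the box, where `C`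
depends only on `a` and `b`. -/
theorem stmt19 (a b : ℝ) (ha : 0 < a) (hab : a ≤ b) :
    ∃ C : ℝ, 0 < C ∧
      ∀ (p : ℕ) (u : Finset (Fin p)), u.Nonempty → u ≠ Finset.univ →
      ∀ K : ℝ, 0 < K →
      ∀ (fstar fn : (Fin p → ℝ) → ℝ), Measurable fstar → Measurable fn →
      ∀ εn : ℝ,
        (∀ x : Fin p → ℝ, (∀ i, x i ∈ Set.Icc (-K) K) → a ≤ fstar x ∧ fstar x ≤ b) →
        (∀ x, |fstar x - fn x| ≤ εn) → εn ≤ a / 2 →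
        ∀ x : Fin p → ℝ, (∀ i, x i ∈ Set.Icc (-K) K) →
          |fstar x / marg u K fstar x - fn x / marg u K fn x| ≤
            C * εn * (fstar x / marg u K fstar x) := by
  refine ⟨2 * b / a ^ 2 + 2 / a, by have hb0 : (0:ℝ) < b := lt_of_lt_of_le ha hab; positivity, ?_⟩
  intro p u _hu _hune K hK fstar fn hfm hfnm εn hbox hclose hεa x hx
  have hε : 0 ≤ εn := le_trans (abs_nonneg _) (hclose x)
  set s : Set (↥(uᶜ : Finset (Fin p)) → ℝ) :=
    Set.univ.pi (fun _ => Set.Icc (-K) K) with hs_def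
  have hs_meas : MeasurableSet s := MeasurableSet.univ_pi (fun _ => measurableSet_Icc)
  -- volume of the box
  have hvol : volume s = ENNReal.ofReal ((2 * K) ^ Fintype.card ↥(uᶜ : Finset (Fin p))) := by
    rw [hs_def, volume_pi_pi]
    have h1 : ∀ _i : ↥(uᶜ : Finset (Fin p)),
        volume (Set.Icc (-K) K) = ENNReal.ofReal (2 * K) := fun _ => by
      rw [Real.volume_Icc]; congr 1; ring
    calc ∏ _i : ↥(uᶜ : Finset (Fin p)), volume (Set.Icc (-K) K)
        = ∏ _i : ↥(uᶜ : Finset (Fin p)), ENNReal.ofReal (2 * K) :=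
          Finset.prod_congr rfl (fun i _ => h1 i)
      _ = ENNReal.ofReal (2 * K) ^ Fintype.card ↥(uᶜ : Finset (Fin p)) := by
          rw [Finset.prod_const, Finset.card_univ]
      _ = ENNReal.ofReal ((2 * K) ^ Fintype.card ↥(uᶜ : Finset (Fin p))) :=
          (ENNReal.ofReal_pow (by linarith) _).symm
  set V : ℝ := (2 * K) ^ Fintype.card ↥(uᶜ : Finset (Fin p)) with hV_def
  have hV : 0 < V := by positivity
  have hvol_lt : volume s < ⊤ := by rw [hvol]; exact ENNReal.ofReal_lt_top
  have hvolr : (volume s).toReal = V := by rw [hvol, ENNReal.toReal_ofReal hV.le]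
  -- the combined point
  set comb : (↥(uᶜ : Finset (Fin p)) → ℝ) → (Fin p → ℝ) :=
    fun y => (fun i => if h : i ∈ uᶜ then y ⟨i, h⟩ else x i) with hcomb_def
  have hcomb_meas : Measurable comb := by
    apply measurable_pi_lambda
    intro i
    by_cases h : i ∈ uᶜ <;> simp only [hcomb_def, h, dif_pos, dif_neg, not_false_iff]
    · exact measurable_pi_apply _
    · exact measurable_const
  have hcomb_box : ∀ y ∈ s, ∀ i, comb y i ∈ Set.Icc (-K) K := by
    intro y hy i
    by_cases h : i ∈ uᶜ
    · simp only [hcomb_def, h, dif_pos]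
      exact hy ⟨i, h⟩ (Set.mem_univ _)
    · simp only [hcomb_def, h, dif_neg, not_false_iff]
      exact hx i
  -- bounds on integrands
  have hgs_bounds : ∀ y ∈ s, a ≤ fstar (comb y) ∧ fstar (comb y) ≤ b :=
    fun y hy => hbox _ (hcomb_box y hy)
  have hgn_bounds : ∀ y ∈ s, a / 2 ≤ fn (comb y) ∧ fn (comb y) ≤ b + a / 2 := by
    intro y hy
    obtain ⟨h1, h2⟩ := hgs_bounds y hy
    have h3 := abs_le.mp (hclose (comb y))
    constructor <;> linarith [h3.1, h3.2]
  -- integrability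
  have hgs_meas : Measurable (fun y => fstar (comb y)) := hfm.comp hcomb_meas
  have hgn_meas : Measurable (fun y => fn (comb y)) := hfnm.comp hcomb_meas
  have hgs_int : IntegrableOn (fun y => fstar (comb y)) s volume := by
    apply Measure.integrableOn_of_bounded hvol_lt.ne hgs_meas.aestronglyMeasurable
    · filter_upwards [self_mem_ae_restrict hs_meas] with y hy
      obtain ⟨h1, h2⟩ := hgs_bounds y hy
      rw [Real.norm_eq_abs, abs_of_pos (lt_of_lt_of_le ha h1)]
      exact h2
  have hgn_int : IntegrableOn (fun y => fn (comb y)) s volume := by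
    apply Measure.integrableOn_of_bounded hvol_lt.ne hgn_meas.aestronglyMeasurable
    · filter_upwards [self_mem_ae_restrict hs_meas] with y hy
      obtain ⟨h1, h2⟩ := hgn_bounds y hy
      rw [Real.norm_eq_abs, abs_of_pos (lt_of_lt_of_le (by positivity) h1)]
      exact h2
  have hconst_int : ∀ c : ℝ, IntegrableOn (fun _ => c) s volume :=
    fun c => integrableOn_const hvol_lt.ne
  -- marginal identifications
  have hmarg_s : marg u K fstar x = ∫ y in s, fstar (comb y) := rfl
  have hmarg_n : marg u K fn x = ∫ y in s, fn (comb y) := rfl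
  -- integral bounds
  have hB1 : a * V ≤ marg u K fstar x := by
    rw [hmarg_s]
    calc a * V = (volume s).toReal • a := by rw [hvolr, smul_eq_mul]; ring
      _ = ∫ _ in s, a := (setIntegral_const a).symm
      _ ≤ ∫ y in s, fstar (comb y) :=
        setIntegral_mono_on (hconst_int a) hgs_int hs_meas (fun y hy => (hgs_bounds y hy).1)
  have hB2 : marg u K fstar x ≤ b * V := by
    rw [hmarg_s]
    calc ∫ y in s, fstar (comb y) ≤ ∫ _ in s, b :=
        setIntegral_mono_on hgs_int (hconst_int b) hs_meas (fun y hy => (hgs_bounds y hy).2)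
      _ = b * V := by rw [setIntegral_const, measureReal_def, hvolr, smul_eq_mul]; ring
  have hB'1 : a / 2 * V ≤ marg u K fn x := by
    rw [hmarg_n]
    calc a / 2 * V = (volume s).toReal • (a / 2) := by rw [hvolr, smul_eq_mul]; ring
      _ = ∫ _ in s, a / 2 := (setIntegral_const _).symm
      _ ≤ ∫ y in s, fn (comb y) :=
        setIntegral_mono_on (hconst_int _) hgn_int hs_meas (fun y hy => (hgn_bounds y hy).1)
  have hBB : |marg u K fstar x - marg u K fn x| ≤ εn * V := by
    rw [hmarg_s, hmarg_n, ← integral_sub hgs_int hgn_int]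
    have := norm_setIntegral_le_of_norm_le_const (μ := volume) (s := s)
      (f := fun y => fstar (comb y) - fn (comb y)) (C := εn) hvol_lt
      (fun y _ => by rw [Real.norm_eq_abs]; exact hclose (comb y))
    rw [Real.norm_eq_abs] at this
    calc |∫ y in s, (fstar (comb y) - fn (comb y))| ≤ εn * (volume s).toReal := this
      _ = εn * V := by rw [hvolr]
  exact ratio_est a b εn V (fstar x) (fn x) (marg u K fstar x) (marg u K fn x)
    ha hab hV hε (hbox x hx).1 (hbox x hx).2 (hclose x) hB1 hB2 hB'1 hBB
end
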